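/- Let β be a braid word on n ≥ 2 strands with inversion datum ι, and let s₀ be the ground state. Then each extended R-matrix value R_t(s₀) is a well-defined nonzero rational function, and the Laurent expansion of P(s₀) at x = 0 has leading term (−1)^N · q^{ℓ(β,ι)} · x^{d_x(s₀)}, where N is the number of crossings t with ε_t = −1 and (ι(e_BL(t)),ι(e_BR(t)),ι(e_TL(t)),ι(e_TR(t))) = (+,−,+,−). In particular, the leading coefficient of P(s₀) is, up to sign, the monomial q^{ℓ(β,ι)}. -/

import Mathlib

/-- A braid word on `n` strands with `m` letters. Strand positions are 0-indexed:
the index `p : Fin n` represents the mathematical position `p+1 ∈ {1,…,n}`.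
The `t`-th letter is a crossing of sign `ε t` involving the strand positions
`k t` and `k t + 1` (i.e. mathematical positions `k t + 1` and `k t + 2`). -/
structure BraidWord (n m : ℕ) where
  k : Fin m → ℕ
  hk : ∀ t, k t + 1 < n
  ε : Fin m → ℤ
  hε : ∀ t, ε t = 1 ∨ ε t = -1

namespace BraidWord

variable {n m : ℕ}

/-- Segments of the closed braid diagram: `(p, t)` is the segment at horizontal
position `p` (0-indexed) and level `t` (mod `m`); the `t`-th letter has its bottom
at level `t` and its top at level `t+1`, and `(p, 0)` is the `p`-th closure segment. -/
abbrev Seg (n m : ℕ) := Fin n × Fin m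

/-- Segment adjacent to the `t`-th crossing at the bottom left. -/
def eBL (β : BraidWord n m) (t : Fin m) : Seg n m :=
  (⟨β.k t, by have := β.hk t; omega⟩, t)

/-- Segment adjacent to the `t`-th crossing at the bottom right. -/
def eBR (β : BraidWord n m) (t : Fin m) : Seg n m :=
  (⟨β.k t + 1, β.hk t⟩, t)

/-- Segment adjacent to the `t`-th crossing at the top left. -/
def eTL [NeZero m] (β : BraidWord n m) (t : Fin m) : Seg n m :=
  (⟨β.k t, by have := β.hk t; omega⟩, t + 1)

/-- Segment adjacent to the `t`-th crossing at the top right. -/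
def eTR [NeZero m] (β : BraidWord n m) (t : Fin m) : Seg n m :=
  (⟨β.k t + 1, β.hk t⟩, t + 1)

/-- The writhe of a braid word: the sum of the signs of its crossings. -/
def writhe (β : BraidWord n m) : ℤ := ∑ t, β.ε t

/-- The allowed sign patterns `(BL, BR, TL, TR)` around a crossing of sign `e`. -/
def allowedQuad (e a b c d : ℤ) : Prop :=
  if e = 1 then
    (a = 1 ∧ b = -1 ∧ c = -1 ∧ d = 1) ∨ (a = -1 ∧ b = 1 ∧ c = 1 ∧ d = -1) ∨
    (a = -1 ∧ b = -1 ∧ c = -1 ∧ d = -1) ∨ (a = -1 ∧ b = 1 ∧ c = -1 ∧ d = 1) ∨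
    (a = 1 ∧ b = 1 ∧ c = 1 ∧ d = 1)
  else
    (a = 1 ∧ b = -1 ∧ c = -1 ∧ d = 1) ∨ (a = -1 ∧ b = 1 ∧ c = 1 ∧ d = -1) ∨
    (a = -1 ∧ b = -1 ∧ c = -1 ∧ d = -1) ∨ (a = 1 ∧ b = -1 ∧ c = 1 ∧ d = -1) ∨
    (a = 1 ∧ b = 1 ∧ c = 1 ∧ d = 1)

/-- An inversion datum on a braid word: a `±1`-assignment to each segment,
constant along strands away from crossings, with allowed patterns at crossings. -/
def IsInvDatum [NeZero m] (β : BraidWord n m) (ι : Seg n m → ℤ) : Prop :=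
  (∀ e : Seg n m, ι e = 1 ∨ ι e = -1) ∧
  (∀ (p : Fin n) (t : Fin m), p.val ≠ β.k t → p.val ≠ β.k t + 1 → ι (p, t) = ι (p, t + 1)) ∧
  (∀ t : Fin m, allowedQuad (β.ε t) (ι (β.eBL t)) (ι (β.eBR t)) (ι (β.eTL t)) (ι (β.eTR t)))

/-- A state on a braid word: an integer assignment to each segment, constant along
strands away from crossings, conserved at each crossing. -/
def IsState [NeZero m] (β : BraidWord n m) (s : Seg n m → ℤ) : Prop :=
  (∀ (p : Fin n) (t : Fin m), p.val ≠ β.k t → p.val ≠ β.k t + 1 → s (p, t) = s (p, t + 1)) ∧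
  (∀ t : Fin m, s (β.eBL t) + s (β.eBR t) = s (β.eTL t) + s (β.eTR t))

/-- The sign of an integer, with the convention that the sign of `0` is `+1`. -/
def isign (a : ℤ) : ℤ := if 0 ≤ a then 1 else -1

/-- A state is valid for an inversion datum `ι` if its signs agree with `ι` and the
inequalities required for the extended `R`-matrix to be nonzero hold at each crossing. -/
def IsValid [NeZero m] (β : BraidWord n m) (ι s : Seg n m → ℤ) : Prop :=
  β.IsState s ∧ (∀ e : Seg n m, isign (s e) = ι e) ∧
  ∀ t : Fin m,
    if β.ε t = 1 then s (β.eTR t) ≤ s (β.eBL t) ∨ (0 ≤ s (β.eTR t) ∧ s (β.eBL t) < 0)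
    else s (β.eTL t) ≤ s (β.eBR t) ∨ (0 ≤ s (β.eTL t) ∧ s (β.eBR t) < 0)

/-- The ground state associated to an inversion datum: `s₀(e) = (ι(e) - 1)/2 ∈ {0, -1}`. -/
def groundState (ι : Seg n m → ℤ) : Seg n m → ℤ := fun e => (ι e - 1) / 2

/-- The (minimal) x-degree of a state:
`d_x(s) = -(n-1)/2 + ∑_t ε_t (s(e_BR(t)) + s(e_TR(t)) + 1)/2`. -/
def xdeg [NeZero m] (β : BraidWord n m) (s : Seg n m → ℤ) : ℚ :=
  -((n : ℚ) - 1) / 2 +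
    ∑ t : Fin m, (β.ε t : ℚ) * (((s (β.eBR t) : ℚ) + (s (β.eTR t) : ℚ) + 1) / 2)

/-- A pair (braid word, inversion datum) is nice if every valid state has nonnegative
x-degree and only finitely many valid states have x-degree below any given bound. -/
def IsNice [NeZero m] (β : BraidWord n m) (ι : Seg n m → ℤ) : Prop :=
  (∀ s, β.IsValid ι s → 0 ≤ β.xdeg s) ∧
  ∀ M : ℝ, {s : Seg n m → ℤ | β.IsValid ι s ∧ ((β.xdeg s : ℚ) : ℝ) ≤ M}.Finite

/-- The invariant `ℓ(β,ι) = -∑_{p=2}^{n} ι(b_p)/2 + ∑_t ε_t (1 + ι(e_BR(t))·ι(e_TR(t)))/4`. -/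
def ell [NeZero m] (β : BraidWord n m) (ι : Seg n m → ℤ) : ℚ :=
  -(∑ p : Fin n, if p.val = 0 then 0 else (ι (p, 0) : ℚ)) / 2 +
    ∑ t : Fin m, (β.ε t : ℚ) * ((1 + (ι (β.eBR t) : ℚ) * (ι (β.eTR t) : ℚ)) / 4)

end BraidWord

open scoped Finset

/-- The field `ℚ(v)((u))` of formal Laurent series in `u = x^{1/2}` with coefficients
in the rational function field `ℚ(v)`, where `v = q^{1/2}`.  The two-variable rational
function field `ℚ(v,u)` embeds into it by Laurent expansion at `x = 0`. -/
noncomputable abbrev Kf : Type := LaurentSeries (RatFunc ℚ)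

/-- The element `v = q^{1/2}` of `Kf`. -/
noncomputable def vv : Kf := HahnSeries.C (RatFunc.X)

/-- The element `u = x^{1/2}` of `Kf`. -/
noncomputable def uu : Kf := HahnSeries.single (1 : ℤ) 1

/-- The quantum integer `[a] = (q^{a/2} - q^{-a/2})/(q^{1/2} - q^{-1/2})`, written in
terms of `w = q^{1/2}` (take `w = v` for `q` and `w = v⁻¹` for `q⁻¹`). -/
noncomputable def qint {K : Type*} [Field K] (w : K) (a : ℤ) : K :=
  (w ^ a - w ^ (-a)) / (w - w⁻¹)

/-- The balanced quantum binomial `qbinom(a, b)_{q} = q^{(a-b)b/2}·[a]⋯[a-b+1]/([b]⋯[1])`,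
written in terms of `w = q^{1/2}`. -/
noncomputable def qbin {K : Type*} [Field K] (w : K) (a : ℤ) (b : ℕ) : K :=
  w ^ ((a - b) * b) * (∏ i ∈ Finset.range b, qint w (a - i)) /
    ∏ i ∈ Finset.range b, qint w ((i : ℤ) + 1)

/-- The q-Pochhammer symbol `(z; Q)_b = (1 - z)(1 - Qz)⋯(1 - Q^{b-1}z)`. -/
noncomputable def pochK {K : Type*} [Field K] (z Q : K) (b : ℕ) : K :=
  ∏ i ∈ Finset.range b, (1 - Q ^ i * z)

/-- The extended `R`-matrix value of a state at the `t`-th crossing, as an element of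
`ℚ(v,u) ⊆ ℚ(v)((u))` (with `q = v²`, `x = u²`), following Park's table. -/
noncomputable def Rmat {n m : ℕ} [NeZero m] (β : BraidWord n m)
    (s : BraidWord.Seg n m → ℤ) (t : Fin m) : Kf :=
  let i := s (β.eBL t); let j := s (β.eBR t)
  let i' := s (β.eTL t); let j' := s (β.eTR t)
  if β.ε t = 1 then
    if j' ≤ i then
      vv ^ (2 * j * j') * (vv * uu) ^ (j + j' + 1) * qbin vv i (i - j').toNat *
        pochK (vv ^ (2 * (j + 1)) * uu ^ (2 : ℤ)) (vv ^ (2 : ℤ)) (i - j').toNat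
    else if 0 ≤ j' ∧ i < 0 then
      vv ^ (2 * j * j') * (vv * uu) ^ (j + j' + 1) * qbin vv i j'.toNat *
        (pochK (vv ^ (2 * j) * uu ^ (2 : ℤ)) (vv ^ (-2 : ℤ)) (j' - i).toNat)⁻¹
    else 0
  else
    if i' ≤ j then
      vv ^ (-(2 * i * i')) * (vv * uu) ^ (-(i + i' + 1)) * qbin vv⁻¹ j (j - i').toNat *
        pochK (vv ^ (2 * (-i - 1)) * uu ^ (-2 : ℤ)) (vv ^ (-2 : ℤ)) (j - i').toNat
    else if 0 ≤ i' ∧ j < 0 then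
      vv ^ (-(2 * i * i')) * (vv * uu) ^ (-(i + i' + 1)) * qbin vv⁻¹ j i'.toNat *
        (pochK (vv ^ (-(2 * i)) * uu ^ (-2 : ℤ)) (vv ^ (2 : ℤ)) (i' - j).toNat)⁻¹
    else 0

/-- The state sum contribution
`P(s) = (∏_{p=2}^{n} x^{-1/2} q^{-1/2 - s(b_p)}) · ∏_t R_t(s)` of a state `s`. -/
noncomputable def Pval {n m : ℕ} [NeZero m] (β : BraidWord n m)
    (s : BraidWord.Seg n m → ℤ) : Kf :=
  (∏ p : Fin n, if p.val = 0 then 1 else uu⁻¹ * vv ^ (-1 - 2 * s (p, 0))) *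
    ∏ t : Fin m, Rmat β s t

/-- The number of crossings `t` with `ε_t = -1` whose inversion-datum pattern is
`(+,-,+,-)`. -/
noncomputable def negCount {n m : ℕ} [NeZero m] (β : BraidWord n m)
    (ι : BraidWord.Seg n m → ℤ) : ℕ :=
  (Finset.univ.filter fun t : Fin m =>
    β.ε t = -1 ∧ ι (β.eBL t) = 1 ∧ ι (β.eBR t) = -1 ∧
      ι (β.eTL t) = 1 ∧ ι (β.eTR t) = -1).card


section Aux

open HahnSeries

/-- Leading-term predicate: `x` is nonzero with order `b` and leading coefficient `c`. -/
def Lead (x : Kf) (b : ℤ) (c : RatFunc ℚ) : Prop :=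
  c ≠ 0 ∧ x ≠ 0 ∧ x.order = b ∧ x.coeff b = c

lemma Lead.ne_zero {x b c} (h : Lead x b c) : x ≠ 0 := h.2.1

lemma Lead.mul {x y : Kf} {b b' c c'} (hx : Lead x b c) (hy : Lead y b' c') :
    Lead (x * y) (b + b') (c * c') := by
  obtain ⟨hc, hx0, hob, hcb⟩ := hx
  obtain ⟨hc', hy0, hob', hcb'⟩ := hy
  refine ⟨mul_ne_zero hc hc', mul_ne_zero hx0 hy0, ?_, ?_⟩
  · rw [HahnSeries.order_mul hx0 hy0, hob, hob']
  · have h := HahnSeries.coeff_mul_order_add_order x y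
    rw [hob, hob', HahnSeries.leadingCoeff_eq, HahnSeries.leadingCoeff_eq,
      hob, hob', hcb, hcb'] at h
    exact h

lemma Lead.one : Lead 1 0 1 :=
  ⟨one_ne_zero, one_ne_zero, HahnSeries.order_one, by simp⟩

lemma Lead.inv {x : Kf} {b c} (h : Lead x b c) : Lead x⁻¹ (-b) c⁻¹ := by
  obtain ⟨hc, hx0, hob, hcb⟩ := h
  have hxi : x⁻¹ ≠ 0 := inv_ne_zero hx0
  have hmul : x * x⁻¹ = 1 := mul_inv_cancel₀ hx0
  have hord : x.order + x⁻¹.order = 0 := by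
    rw [← HahnSeries.order_mul hx0 hxi, hmul, HahnSeries.order_one]
  have hoi : x⁻¹.order = -b := by omega
  refine ⟨inv_ne_zero hc, hxi, hoi, ?_⟩
  have h := HahnSeries.coeff_mul_order_add_order x x⁻¹
  rw [HahnSeries.leadingCoeff_eq, HahnSeries.leadingCoeff_eq, hob, hoi, hmul,
    add_neg_cancel, hcb] at h
  have h1 : (1 : Kf).coeff 0 = 1 := by simp
  rw [h1] at h
  exact (inv_eq_of_mul_eq_one_right h.symm).symm

lemma Lead.prod {α : Type*} (s : Finset α) (f : α → Kf) (b : α → ℤ) (c : α → RatFunc ℚ)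
    (h : ∀ a ∈ s, Lead (f a) (b a) (c a)) :
    Lead (∏ a ∈ s, f a) (∑ a ∈ s, b a) (∏ a ∈ s, c a) := by
  induction s using Finset.cons_induction with
  | empty => simpa using Lead.one
  | cons a s ha ih =>
      rw [Finset.prod_cons, Finset.sum_cons, Finset.prod_cons]
      exact (h a (Finset.mem_cons_self a s)).mul
        (ih fun x hx => h x (Finset.mem_cons_of_mem hx))

lemma vv_zpow (z : ℤ) : vv ^ z = HahnSeries.C (RatFunc.X ^ z) :=
  (map_zpow₀ (HahnSeries.C : RatFunc ℚ →+* Kf) _ _).symm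

lemma single_one_mul (a b : ℤ) :
    (HahnSeries.single a (1 : RatFunc ℚ)) * HahnSeries.single b 1 =
      HahnSeries.single (a + b) 1 := by
  rw [HahnSeries.single_mul_single, one_mul]

lemma single_one_inv (a : ℤ) :
    (HahnSeries.single a (1 : RatFunc ℚ) : Kf)⁻¹ = HahnSeries.single (-a) 1 := by
  refine (inv_eq_of_mul_eq_one_right ?_)
  rw [single_one_mul, add_neg_cancel]
  rfl

lemma uu_zpow (z : ℤ) : uu ^ z = HahnSeries.single z 1 := by
  have hn : ∀ k : ℕ, uu ^ k = HahnSeries.single (k : ℤ) 1 := by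
    intro k
    induction k with
    | zero => simp
    | succ k ih =>
        rw [pow_succ, ih, uu, single_one_mul]
        norm_num
  cases z with
  | ofNat k => rw [Int.ofNat_eq_coe, zpow_natCast, hn]
  | negSucc k =>
      rw [zpow_negSucc, hn, single_one_inv]
      congr 1

lemma vu_single (a b : ℤ) :
    vv ^ a * uu ^ b = HahnSeries.single b (RatFunc.X ^ a) := by
  rw [vv_zpow, uu_zpow, HahnSeries.C_apply, HahnSeries.single_mul_single, zero_add, mul_one]

lemma Xz_ne (a : ℤ) : (RatFunc.X : RatFunc ℚ) ^ a ≠ 0 :=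
  zpow_ne_zero a RatFunc.X_ne_zero

lemma Lead.mono (a b : ℤ) : Lead (vv ^ a * uu ^ b) b (RatFunc.X ^ a) := by
  rw [vu_single]
  exact ⟨Xz_ne a, HahnSeries.single_ne_zero (Xz_ne a),
    HahnSeries.order_single (Xz_ne a), by simp⟩

lemma Lead.one_sub_single_pos {a : ℤ} (ha : 0 < a) (c : RatFunc ℚ) :
    Lead (1 - HahnSeries.single a c) 0 1 := by
  set x : Kf := 1 - HahnSeries.single a c with hx
  have hcoeff : ∀ g : ℤ, g ≤ 0 → x.coeff g = if g = 0 then 1 else 0 := by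
    intro g hg
    rw [hx, HahnSeries.coeff_sub, HahnSeries.coeff_single_of_ne (by omega)]
    rcases eq_or_ne g 0 with h | h
    · simp [h]
    · simp [h, HahnSeries.coeff_one, if_neg h]
  have h0 : x.coeff 0 = 1 := by rw [hcoeff 0 le_rfl]; simp
  have hne : x ≠ 0 := fun h => by simp [h] at h0
  have hord : x.order = 0 := by
    have hle : x.order ≤ 0 := HahnSeries.order_le_of_coeff_ne_zero (by rw [h0]; exact one_ne_zero)
    rcases lt_or_eq_of_le hle with hlt | he
    · exfalso
      have := mt HahnSeries.coeff_order_eq_zero.mp hne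
      rw [hcoeff x.order hle, if_neg (by omega)] at this
      exact this rfl
    · exact he
  exact ⟨one_ne_zero, hne, hord, h0⟩

lemma Lead.one_sub_single_neg {a : ℤ} (ha : a < 0) {c : RatFunc ℚ} (hc : c ≠ 0) :
    Lead (1 - HahnSeries.single a c) a (-c) := by
  set x : Kf := 1 - HahnSeries.single a c with hx
  have hcoeff : ∀ g : ℤ, g ≤ a → x.coeff g = if g = a then -c else 0 := by
    intro g hg
    rw [hx, HahnSeries.coeff_sub, HahnSeries.coeff_one, if_neg (by omega)]
    rcases eq_or_ne g a with h | h
    · rw [h]; simp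
    · rw [HahnSeries.coeff_single_of_ne h, if_neg h]; simp
  have h0 : x.coeff a = -c := by rw [hcoeff a le_rfl]; simp
  have hne : x ≠ 0 := fun h => by simp [h] at h0; exact hc h0
  have hord : x.order = a := by
    have hle : x.order ≤ a :=
      HahnSeries.order_le_of_coeff_ne_zero (by rw [h0]; exact neg_ne_zero.mpr hc)
    rcases lt_or_eq_of_le hle with hlt | he
    · exfalso
      have := mt HahnSeries.coeff_order_eq_zero.mp hne
      rw [hcoeff x.order hle, if_neg (by omega)] at this
      exact this rfl
    · exact he
  exact ⟨neg_ne_zero.mpr hc, hne, hord, h0⟩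

lemma qbin_zero {K : Type*} [Field K] (w : K) (a : ℤ) : qbin w a 0 = 1 := by
  simp [qbin]

lemma pochK_zero {K : Type*} [Field K] (z Q : K) : pochK z Q 0 = 1 := by
  simp [pochK]

lemma pochK_one {K : Type*} [Field K] (z Q : K) : pochK z Q 1 = 1 - z := by
  simp [pochK]

lemma vv_ne : vv ≠ 0 := by
  rw [vv, HahnSeries.C_apply]
  exact HahnSeries.single_ne_zero RatFunc.X_ne_zero

lemma uu_ne : uu ≠ 0 := HahnSeries.single_ne_zero one_ne_zero

lemma Lead.mono2 (a b : ℤ) : Lead (vv ^ a * (vv * uu) ^ b) b (RatFunc.X ^ (a + b)) := by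
  rw [mul_zpow, ← mul_assoc, ← zpow_add₀ vv_ne]
  exact Lead.mono (a + b) b

lemma crossing_lead {n m : ℕ} [NeZero m] (β : BraidWord n m) (ι : BraidWord.Seg n m → ℤ)
    (hι : β.IsInvDatum ι) (t : Fin m) :
    Lead (Rmat β (BraidWord.groundState ι) t)
      (β.ε t * (BraidWord.groundState ι (β.eBR t) + BraidWord.groundState ι (β.eTR t) + 1))
      ((if β.ε t = -1 ∧ ι (β.eBL t) = 1 ∧ ι (β.eBR t) = -1 ∧ ι (β.eTL t) = 1 ∧ ι (β.eTR t) = -1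
          then -1 else 1) * RatFunc.X ^ (β.ε t * ((1 + ι (β.eBR t) * ι (β.eTR t)) / 2))) := by
  have hq := hι.2.2 t
  rcases β.hε t with he | he <;>
    rw [BraidWord.allowedQuad] at hq <;> rw [he] at hq <;> norm_num at hq <;>
    rcases hq with ⟨h1,h2,h3,h4⟩|⟨h1,h2,h3,h4⟩|⟨h1,h2,h3,h4⟩|⟨h1,h2,h3,h4⟩|⟨h1,h2,h3,h4⟩ <;>
    norm_num [Rmat, BraidWord.groundState, he, h1, h2, h3, h4, qbin_zero, pochK_zero,
      pochK_one, uu_zpow]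
  · exact Lead.one
  · exact Lead.one
  · -- (+1) pattern (-,-,-,-)
    have hx : vv ^ (2 : ℤ) * (uu⁻¹ * vv⁻¹) = vv ^ (1 : ℤ) * uu ^ (-1 : ℤ) := by
      rw [zpow_one, zpow_neg, zpow_one]
      have hv := vv_ne
      have hu := uu_ne
      field_simp
    rw [show ((2:ℤ):ℤ) = 2 from rfl] at hx
    rw [← zpow_natCast, Nat.cast_ofNat, hx]
    simpa using Lead.mono 1 (-1)
  · -- (+1) pattern (-,+,-,+)
    have h := (Lead.mono2 0 1).mul ((Lead.one_sub_single_pos (a := 2) (by norm_num)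
      (1 : RatFunc ℚ)).inv)
    rw [show (uu ^ 2 : Kf) = HahnSeries.single (2 : ℤ) 1 by rw [← uu_zpow]; norm_cast]
    simpa using h
  · -- (+1) pattern (+,+,+,+)
    have hx : vv * uu = vv ^ (1 : ℤ) * uu ^ (1 : ℤ) := by rw [zpow_one, zpow_one]
    rw [hx]
    simpa using Lead.mono 1 1
  · exact Lead.one
  · exact Lead.one
  · -- (-1) pattern (-,-,-,-)
    have hx : (vv ^ (2 : ℤ))⁻¹ * (vv * uu) = vv ^ (-1 : ℤ) * uu ^ (1 : ℤ) := by
      have hv := vv_ne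
      have hu := uu_ne
      rw [zpow_two, zpow_neg, zpow_one, zpow_one, mul_inv]
      field_simp
    rw [← zpow_natCast, Nat.cast_ofNat, hx]
    simpa using Lead.mono (-1) 1
  · -- (-1) pattern (+,-,+,-)
    rw [show (uu ^ 2 : Kf)⁻¹ = HahnSeries.single (-2 : ℤ) 1 by
      rw [← uu_zpow, zpow_neg]; norm_cast]
    have hx : uu⁻¹ * vv⁻¹ = vv ^ (-1 : ℤ) * uu ^ (-1 : ℤ) := by
      rw [zpow_neg, zpow_neg, zpow_one, zpow_one]
      ring
    rw [hx]
    have h := (Lead.mono (-1) (-1)).mul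
      ((Lead.one_sub_single_neg (a := -2) (by norm_num) (one_ne_zero)).inv)
    norm_num at h
    rw [zpow_neg, zpow_neg, zpow_one, zpow_one]
    exact h
  · -- (-1) pattern (+,+,+,+)
    have hx : uu⁻¹ * vv⁻¹ = vv ^ (-1 : ℤ) * uu ^ (-1 : ℤ) := by
      rw [zpow_neg, zpow_neg, zpow_one, zpow_one]
      ring
    rw [hx]
    simpa using Lead.mono (-1) (-1)

lemma closure_lead {n m : ℕ} [NeZero m] (β : BraidWord n m) (ι : BraidWord.Seg n m → ℤ)
    (hι : β.IsInvDatum ι) (p : Fin n) :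
    Lead (if p.val = 0 then 1 else uu⁻¹ * vv ^ (-1 - 2 * BraidWord.groundState ι (p, 0)))
      (if p.val = 0 then 0 else -1)
      (RatFunc.X ^ (if p.val = 0 then 0 else -ι (p, 0))) := by
  rcases eq_or_ne p.val 0 with hp | hp
  · rw [if_pos hp, if_pos hp, if_pos hp, zpow_zero]
    exact Lead.one
  · rw [if_neg hp, if_neg hp, if_neg hp]
    have hval : -1 - 2 * BraidWord.groundState ι (p, 0) = -ι (p, 0) := by
      unfold BraidWord.groundState
      rcases hι.1 (p, 0) with h | h <;> rw [h] <;> norm_num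
    rw [hval, mul_comm, show (uu⁻¹ : Kf) = uu ^ (-1 : ℤ) by rw [zpow_neg, zpow_one]]
    exact Lead.mono (-ι (p, 0)) (-1)

lemma prod_X_zpow {α : Type*} (s : Finset α) (f : α → ℤ) :
    ∏ a ∈ s, (RatFunc.X : RatFunc ℚ) ^ f a = RatFunc.X ^ (∑ a ∈ s, f a) := by
  induction s using Finset.cons_induction with
  | empty => simp
  | cons a s ha ih =>
      rw [Finset.prod_cons, Finset.sum_cons, ih, ← zpow_add₀ RatFunc.X_ne_zero]

end Aux

/-- For a braid word with inversion datum, each extended `R`-matrix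
value at the ground state is nonzero, and the Laurent expansion at `x = 0` of `P(s₀)`
has leading term `(-1)^N · q^{ℓ(β,ι)} · x^{d_x(s₀)}`, i.e. as an element of
`ℚ(v)((u))` its order is `2·d_x(s₀)` (in `u = x^{1/2}`) and its leading coefficient is
`(-1)^N · v^{2·ℓ(β,ι)}`. -/
theorem ground_state_leading_term (n m : ℕ) [NeZero m] (β : BraidWord n m)
    (ι : BraidWord.Seg n m → ℤ) (hι : β.IsInvDatum ι) :
    (∀ t : Fin m, Rmat β (BraidWord.groundState ι) t ≠ 0) ∧
    Pval β (BraidWord.groundState ι) ≠ 0 ∧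
    ∃ dd e : ℤ, (dd : ℚ) = 2 * β.xdeg (BraidWord.groundState ι) ∧
      (e : ℚ) = 2 * β.ell ι ∧
      (Pval β (BraidWord.groundState ι)).order = dd ∧
      (Pval β (BraidWord.groundState ι)).coeff dd =
        (-1) ^ negCount β ι * RatFunc.X ^ e := by
  classical
  have hm : 0 < m := Nat.pos_of_ne_zero (NeZero.ne m)
  have hn : 2 ≤ n := by have := β.hk ⟨0, hm⟩; omega
  haveI : NeZero n := ⟨by omega⟩
  set s0 := BraidWord.groundState ι with hs0
  have hc : ∀ t : Fin m, Lead (Rmat β s0 t)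
      (β.ε t * (s0 (β.eBR t) + s0 (β.eTR t) + 1))
      ((if β.ε t = -1 ∧ ι (β.eBL t) = 1 ∧ ι (β.eBR t) = -1 ∧ ι (β.eTL t) = 1 ∧
          ι (β.eTR t) = -1 then -1 else 1) *
        RatFunc.X ^ (β.ε t * ((1 + ι (β.eBR t) * ι (β.eTR t)) / 2))) :=
    fun t => crossing_lead β ι hι t
  have hR := Lead.prod Finset.univ (fun t => Rmat β s0 t)
      (fun t => β.ε t * (s0 (β.eBR t) + s0 (β.eTR t) + 1))
      (fun t => (if β.ε t = -1 ∧ ι (β.eBL t) = 1 ∧ ι (β.eBR t) = -1 ∧ ι (β.eTL t) = 1 ∧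
          ι (β.eTR t) = -1 then -1 else 1) *
        RatFunc.X ^ (β.ε t * ((1 + ι (β.eBR t) * ι (β.eTR t)) / 2)))
      (fun t _ => hc t)
  have hCl := Lead.prod Finset.univ
      (fun p : Fin n => if p.val = 0 then 1 else uu⁻¹ * vv ^ (-1 - 2 * s0 (p, 0)))
      (fun p : Fin n => if p.val = 0 then 0 else -1)
      (fun p : Fin n => RatFunc.X ^ (if p.val = 0 then 0 else -ι (p, 0)))
      (fun p _ => closure_lead β ι hι p)
  have hP : Lead (Pval β s0)
      ((∑ p : Fin n, if p.val = 0 then 0 else -1) +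
        ∑ t, β.ε t * (s0 (β.eBR t) + s0 (β.eTR t) + 1))
      ((∏ p : Fin n, RatFunc.X ^ (if p.val = 0 then 0 else -ι (p, 0))) *
        ∏ t, ((if β.ε t = -1 ∧ ι (β.eBL t) = 1 ∧ ι (β.eBR t) = -1 ∧ ι (β.eTL t) = 1 ∧
          ι (β.eTR t) = -1 then -1 else 1) *
          RatFunc.X ^ (β.ε t * ((1 + ι (β.eBR t) * ι (β.eTR t)) / 2)))) := by
    unfold Pval
    exact hCl.mul hR
  refine ⟨fun t => (hc t).ne_zero, hP.ne_zero,
    (∑ p : Fin n, if p.val = 0 then 0 else -1) +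
      ∑ t, β.ε t * (s0 (β.eBR t) + s0 (β.eTR t) + 1),
    (∑ p : Fin n, if p.val = 0 then 0 else -ι (p, 0)) +
      ∑ t, β.ε t * ((1 + ι (β.eBR t) * ι (β.eTR t)) / 2),
    ?_, ?_, hP.2.2.1, ?_⟩
  · -- dd = 2 * xdeg
    have hsum : (∑ p : Fin n, if (p : Fin n).val = 0 then (0 : ℤ) else -1) = 1 - n := by
      have h1 : ∀ p : Fin n, (if p.val = 0 then (0 : ℤ) else -1) =
          (if p = 0 then (1 : ℤ) else 0) - 1 := by
        intro p
        by_cases h : p = 0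
        · simp [h]
        · rw [if_neg h, if_neg (fun hv => h (Fin.ext (by simp [hv])))]
          ring
      rw [Finset.sum_congr rfl fun p _ => h1 p, Finset.sum_sub_distrib,
        Finset.sum_ite_eq' Finset.univ (0 : Fin n) (fun _ => (1 : ℤ))]
      simp
    rw [hsum, BraidWord.xdeg]
    push_cast
    rw [mul_add, Finset.mul_sum]
    congr 1
    · ring
    · exact Finset.sum_congr rfl fun t _ => by ring
  · -- e = 2 * ell
    have e2 : ∀ t : Fin m, ((β.ε t * ((1 + ι (β.eBR t) * ι (β.eTR t)) / 2) : ℤ) : ℚ) =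
        2 * ((β.ε t : ℚ) * ((1 + (ι (β.eBR t) : ℚ) * (ι (β.eTR t) : ℚ)) / 4)) := by
      intro t
      rcases hι.1 (β.eBR t) with hb | hb <;> rcases hι.1 (β.eTR t) with hd | hd <;>
        rw [hb, hd] <;> norm_num <;> ring
    have e1 : ((∑ p : Fin n, if (p : Fin n).val = 0 then (0 : ℤ) else -ι (p, 0) : ℤ) : ℚ) =
        -(∑ p : Fin n, if p.val = 0 then (0 : ℚ) else (ι (p, 0) : ℚ)) := by
      push_cast
      rw [← Finset.sum_neg_distrib]
      refine Finset.sum_congr rfl fun p _ => ?_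
      by_cases h : p.val = 0 <;> simp [h]
    rw [BraidWord.ell, mul_add, Int.cast_add, e1, Int.cast_sum, Finset.mul_sum]
    congr 1
    · ring
    · exact Finset.sum_congr rfl fun t _ => e2 t
  · -- coefficient
    rw [hP.2.2.2]
    rw [prod_X_zpow, Finset.prod_mul_distrib, prod_X_zpow, Finset.prod_ite,
      Finset.prod_const, Finset.prod_const_one, mul_one]
    rw [negCount, zpow_add₀ RatFunc.X_ne_zero]
    ring
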